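/- For k = 4 and all x > 0, g_4'(x) < 2(x·g_4(x) − 1), where g_4(x) = 4/(3x + √(x²+4)). -/

import Mathlib

noncomputable def g (k : ℝ) (x : ℝ) : ℝ := k / ((k-1)*x + Real.sqrt (x^2 + k))

theorem g4_deriv_ineq : ∀ x : ℝ, 0 < x → deriv (g 4) x < 2 * (x * g 4 x - 1) := by
  intro x hx
  set s := Real.sqrt (x^2 + 4) with hsdef
  have hs4 : (0:ℝ) < x^2 + 4 := by positivity
  have hs : 0 < s := Real.sqrt_pos.mpr hs4
  have hs2 : s^2 = x^2 + 4 := Real.sq_sqrt hs4.le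
  have hD : 0 < 3*x + s := by linarith
  have h1 : HasDerivAt (fun y : ℝ => y^2 + 4) (2*x) x := by
    simpa using ((hasDerivAt_pow 2 x).add_const (4:ℝ))
  have h2 : HasDerivAt (fun y : ℝ => Real.sqrt (y^2 + 4)) (x/s) x := by
    have := (Real.hasDerivAt_sqrt (by positivity : x^2 + 4 ≠ 0)).comp x h1
    refine this.congr_deriv ?_
    field_simp
    ring
  have h3 : HasDerivAt (fun y : ℝ => ((4:ℝ)-1)*y + Real.sqrt (y^2 + 4)) (3 + x/s) x := by
    have := ((hasDerivAt_id x).const_mul ((4:ℝ)-1)).add h2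
    exact this.congr_deriv (by norm_num)
  have h4 : HasDerivAt (g 4) ((0 * (((4:ℝ)-1)*x + s) - 4 * (3 + x/s)) / (((4:ℝ)-1)*x + s)^2) x := by
    have := (hasDerivAt_const x (4:ℝ)).div h3 (by norm_num; linarith : ((4:ℝ)-1)*x + s ≠ 0)
    exact this
  rw [h4.deriv]
  have hg : g 4 x = 4 / (3*x + s) := by
    unfold g; norm_num
    rfl
  rw [hg]
  have hkey : x*(x^2+3) < s*(x^2+1) := by
    have hsq : (s*(x^2+1))^2 = (x*(x^2+3))^2 + 4 := by nlinarith [hs2]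
    by_contra hcon
    push_neg at hcon
    have hA : 0 < s*(x^2+1) := by positivity
    have := mul_self_le_mul_self hA.le hcon
    nlinarith
  have h31 : ((4:ℝ)-1) = 3 := by norm_num
  rw [h31]
  have hsne : s ≠ 0 := hs.ne'
  have hDne : (3*x + s) ≠ 0 := hD.ne'
  have hs3 : s^3 = s*(x^2+4) := by rw [pow_succ, hs2]; ring
  have hL : (0 * (3*x + s) - 4 * (3 + x/s)) / (3*x + s)^2
      = (-(4*(3*s+x))) / (s*(3*x + s)^2) := by
    field_simp
    ring
  have hR : 2 * (x * (4 / (3*x + s)) - 1)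
      = (2*(x-s)*(s*(3*x+s))) / (s*(3*x + s)^2) := by
    field_simp
    ring
  rw [hL, hR, div_lt_div_iff_of_pos_right (by positivity : (0:ℝ) < s*(3*x+s)^2)]
  nlinarith [hkey, hs2, hs3]
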